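/- Let p₁, …, p_k be independent random variables each with non-decreasing density on [0,1], and fix thresholds τ₁, …, τ_k ∈ (0,1]. Conditional on the event {p_j ≤ τ_j for all j ≤ k} (assumed to have positive probability), the random variables p_j/τ_j are jointly super-uniform: for all t ∈ [0,1]^k, P(p₁/τ₁ ≤ t₁, …, p_k/τ_k ≤ t_k | p_j ≤ τ_j ∀j) ≤ ∏_{j=1}^k t_j. Consequently, P(−2 ∑_{j=1}^k log(p_j/τ_j) ≥ Q | selection) ≤ P(χ²_{2k} ≥ Q) for every Q, where χ²_{2k} denotes a chi-squared random variable with 2k degrees of freedom. -/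

import Mathlib

open MeasureTheory ProbabilityTheory Set
open scoped ENNReal

noncomputable def Gaux (k : ℕ) (Q : ℝ) : ℝ :=
  Real.exp (-(Q/2)) * ∑ i ∈ Finset.range k, (Q/2)^i / (i.factorial : ℝ)

noncomputable def Gsurv (k : ℕ) (Q : ℝ) : ℝ :=
  if Q ≤ 0 then 1 else Gaux k Q

lemma Gaux_zero_arg (k : ℕ) (hk : 1 ≤ k) : Gaux k 0 = 1 := by
  unfold Gaux
  rw [Finset.sum_eq_single 0]
  · norm_num
  · intro i hi hne
    simp [zero_pow hne]
  · intro h; simp at h; omega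

lemma Gaux_nonneg {k : ℕ} {Q : ℝ} (hQ : 0 ≤ Q) : 0 ≤ Gaux k Q := by
  apply mul_nonneg (Real.exp_nonneg _)
  apply Finset.sum_nonneg
  intro i _
  positivity

lemma Gaux_le_one {k : ℕ} {Q : ℝ} (hQ : 0 ≤ Q) : Gaux k Q ≤ 1 := by
  unfold Gaux
  have h1 : ∑ i ∈ Finset.range k, (Q/2)^i / (i.factorial : ℝ) ≤ Real.exp (Q/2) :=
    Real.sum_le_exp_of_nonneg (by linarith) k
  calc Real.exp (-(Q/2)) * ∑ i ∈ Finset.range k, (Q/2)^i / (i.factorial : ℝ)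
      ≤ Real.exp (-(Q/2)) * Real.exp (Q/2) := by
        exact mul_le_mul_of_nonneg_left h1 (Real.exp_nonneg _)
    _ = 1 := by rw [← Real.exp_add]; norm_num

lemma Gsurv_nonneg (k : ℕ) (Q : ℝ) : 0 ≤ Gsurv k Q := by
  unfold Gsurv
  split
  · norm_num
  · exact Gaux_nonneg (by linarith [not_le.mp (by assumption)])

lemma Gsurv_le_one (k : ℕ) (Q : ℝ) : Gsurv k Q ≤ 1 := by
  unfold Gsurv
  split
  · norm_num
  · exact Gaux_le_one (by linarith [not_le.mp (by assumption)])

lemma hasDerivAt_Gaux (k : ℕ) (Q : ℝ) :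
    HasDerivAt (Gaux (k+1))
      (-(1/2) * (Real.exp (-(Q/2)) * (Q/2)^k / (k.factorial : ℝ))) Q := by
  induction k with
  | zero =>
      have h : Gaux 1 = fun Q => Real.exp (-(Q/2)) := by
        funext x; unfold Gaux; simp
      rw [h]
      simpa using ((hasDerivAt_id Q).div_const 2).neg.exp.congr_deriv (by simp only [id_eq, Pi.neg_apply]; ring)
  | succ n ih =>
      have hsplit : Gaux (n+2) = fun x => Gaux (n+1) x
          + Real.exp (-(x/2)) * ((x/2)^(n+1) / ((n+1).factorial : ℝ)) := by
        funext x; unfold Gaux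
        rw [Finset.sum_range_succ]
        ring
      rw [hsplit]
      have hexp : HasDerivAt (fun x : ℝ => Real.exp (-(x/2))) (-(1/2) * Real.exp (-(Q/2))) Q := by
        simpa using ((hasDerivAt_id Q).div_const 2).neg.exp.congr_deriv (by simp only [id_eq, Pi.neg_apply]; ring)
      have hpow : HasDerivAt (fun x : ℝ => ((x/2)^(n+1) / ((n+1).factorial : ℝ)))
          (((n+1) : ℝ) * (Q/2)^n * (1/2) / ((n+1).factorial : ℝ)) Q := by
        have := (((hasDerivAt_id Q).div_const 2).pow (n+1)).div_const ((n+1).factorial : ℝ)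
        simpa using this.congr_deriv (by simp only [id_eq]; push_cast; ring)
      have hterm := hexp.mul hpow
      have := ih.add hterm
      apply this.congr_deriv
      have hfact : ((n+1).factorial : ℝ) = ((n+1):ℝ) * (n.factorial : ℝ) := by
        rw [Nat.factorial_succ]; push_cast; ring
      have hne : ((n+1):ℝ) ≠ 0 := by positivity
      have hfne : (n.factorial : ℝ) ≠ 0 := by positivity
      rw [hfact]
      field_simp
      ring

lemma Gaux_antitoneOn (k : ℕ) : AntitoneOn (Gaux k) (Set.Ici (0:ℝ)) := by
  cases k with
  | zero =>
      intro x _ y _ _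
      unfold Gaux; simp
  | succ n =>
      have hd : ∀ x : ℝ, HasDerivAt (Gaux (n+1))
          (-(1/2) * (Real.exp (-(x/2)) * (x/2)^n / (n.factorial : ℝ))) x :=
        fun x => hasDerivAt_Gaux n x
      apply antitoneOn_of_deriv_nonpos (convex_Ici 0)
      · exact fun x _ => (hd x).continuousAt.continuousWithinAt
      · intro x _
        exact (hd x).differentiableAt.differentiableWithinAt
      · intro x hx
        rw [interior_Ici] at hx
        rw [(hd x).deriv]
        have hxpos : (0:ℝ) < x := hx
        have : (0:ℝ) ≤ Real.exp (-(x/2)) * (x/2)^n / (n.factorial : ℝ) := by positivity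
        linarith

lemma Gsurv_antitone (k : ℕ) : Antitone (Gsurv k) := by
  intro x y hxy
  unfold Gsurv
  by_cases hy : y ≤ 0
  · have hx : x ≤ 0 := le_trans hxy hy
    rw [if_pos hx, if_pos hy]
  · rw [if_neg hy]
    by_cases hx : x ≤ 0
    · rw [if_pos hx]
      exact Gaux_le_one (by linarith [not_le.mp hy])
    · rw [if_neg hx]
      exact Gaux_antitoneOn k (le_of_lt (not_le.mp hx)) (le_of_lt (not_le.mp hy)) hxy

noncomputable def gpdf (k : ℕ) (x : ℝ) : ℝ :=
  (1/2) * Real.exp (-(x/2)) * (x/2)^(k-1) / ((k-1).factorial : ℝ)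

lemma gpdf_continuous (k : ℕ) : Continuous (gpdf k) := by
  unfold gpdf; fun_prop

lemma gammaPDFReal_eq (k : ℕ) (hk : 1 ≤ k) {x : ℝ} (hx : 0 ≤ x) :
    gammaPDFReal (k:ℝ) (1/2) x = gpdf k x := by
  obtain ⟨n, rfl⟩ : ∃ n, k = n + 1 := ⟨k - 1, by omega⟩
  unfold gammaPDFReal gpdf
  rw [if_pos hx]
  have h1 : ((n+1:ℕ):ℝ) - 1 = ((n:ℕ):ℝ) := by push_cast; ring
  have h2 : x ^ (((n+1:ℕ):ℝ) - 1) = x ^ (n:ℕ) := by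
    rw [h1, Real.rpow_natCast]
  have h3 : ((1:ℝ)/2) ^ (((n+1:ℕ)):ℝ) = ((1:ℝ)/2) ^ ((n+1):ℕ) := by
    rw [Real.rpow_natCast]
  have h4 : Real.Gamma ((n+1:ℕ):ℝ) = (n.factorial : ℝ) := by
    push_cast
    exact_mod_cast Real.Gamma_nat_eq_factorial n
  simp only [h2, h3, h4]
  have h5 : (x/2)^((n+1)-1 : ℕ) = x^(n:ℕ) / 2^(n:ℕ) := by
    simp [div_pow]
  rw [h5]
  have : -(1/2*x) = -(x/2) := by ring
  rw [this]
  have h6 : ((n+1)-1 : ℕ) = n := rfl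
  rw [h6]
  field_simp
  ring
  rw [mul_assoc, ← mul_pow]; norm_num

lemma gamma_Ici (k : ℕ) (hk : 1 ≤ k) (Q : ℝ) :
    gammaMeasure (k:ℝ) (1/2) (Set.Ici Q) = ENNReal.ofReal (Gsurv k Q) := by
  have hk0 : (0:ℝ) < (k:ℝ) := by exact_mod_cast hk
  haveI : IsProbabilityMeasure (gammaMeasure (k:ℝ) (1/2)) :=
    isProbabilityMeasure_gammaMeasure hk0 (by norm_num)
  have hIio : gammaMeasure (k:ℝ) (1/2) (Set.Iio Q) = ENNReal.ofReal (1 - Gsurv k Q) := by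
    by_cases hQ : Q ≤ 0
    · have h0 : gammaMeasure (k:ℝ) (1/2) (Set.Iio Q) = 0 := by
        rw [gammaMeasure, withDensity_apply _ measurableSet_Iio]
        exact lintegral_gammaPDF_of_nonpos hQ
      rw [h0]
      unfold Gsurv
      rw [if_pos hQ]
      simp
    · push_neg at hQ
      rw [gammaMeasure, withDensity_apply _ measurableSet_Iio]
      have hsplit : Set.Iio Q = Set.Iio (0:ℝ) ∪ Set.Ico 0 Q := by
        rw [Set.Iio_union_Ico_eq_Iio hQ.le]
      rw [hsplit, lintegral_union measurableSet_Ico (by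
        apply Set.disjoint_left.mpr
        intro x hx hx'
        exact absurd hx'.1 (not_le.mpr hx))]
      have hz : ∫⁻ x in Set.Iio (0:ℝ), gammaPDF (k:ℝ) (1/2) x = 0 :=
        lintegral_gammaPDF_of_nonpos le_rfl
      rw [hz, zero_add]
      have hcongr : ∫⁻ x in Set.Ico (0:ℝ) Q, gammaPDF (k:ℝ) (1/2) x
          = ∫⁻ x in Set.Ico (0:ℝ) Q, ENNReal.ofReal (gpdf k x) := by
        apply setLIntegral_congr_fun measurableSet_Ico
        intro x hx
        rw [gammaPDF, gammaPDFReal_eq k hk hx.1]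
      rw [hcongr]
      have hint : IntegrableOn (gpdf k) (Set.Ico 0 Q) volume := by
        apply ((gpdf_continuous k).integrableOn_Icc (a := 0) (b := Q)).mono_set
          Set.Ico_subset_Icc_self
      rw [← ofReal_integral_eq_lintegral_ofReal hint ((ae_restrict_iff' measurableSet_Ico).mpr
        (ae_of_all _ (fun x hx => by
          unfold gpdf
          have hx2 : (0:ℝ) ≤ x / 2 := by linarith [hx.1]
          have := pow_nonneg hx2 (k-1)
          have he := Real.exp_nonneg (-(x/2))
          positivity)))]
      congr 1
      have hIoc : ∫ x in Set.Ico (0:ℝ) Q, gpdf k x = ∫ x in (0:ℝ)..Q, gpdf k x := by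
        rw [setIntegral_congr_set Ico_ae_eq_Ioc, intervalIntegral.integral_of_le hQ.le]
      rw [hIoc]
      have hderiv : ∀ x ∈ Set.uIcc (0:ℝ) Q, HasDerivAt (fun y => -(Gaux k y)) (gpdf k x) x := by
        intro x _
        obtain ⟨n, rfl⟩ : ∃ n, k = n + 1 := ⟨k - 1, by omega⟩
        have := (hasDerivAt_Gaux n x).neg
        apply this.congr_deriv
        unfold gpdf
        simp only [Nat.add_sub_cancel]
        ring
      rw [intervalIntegral.integral_eq_sub_of_hasDerivAt hderiv
        ((gpdf_continuous k).intervalIntegrable 0 Q)]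
      unfold Gsurv
      rw [if_neg (not_le.mpr hQ), Gaux_zero_arg k hk]
      ring
  have hcompl : Set.Ici Q = (Set.Iio Q)ᶜ := by simp
  rw [hcompl, measure_compl measurableSet_Iio (measure_ne_top _ _), hIio, measure_univ]
  have h01 : 0 ≤ Gsurv k Q := Gsurv_nonneg k Q
  have h11 : Gsurv k Q ≤ 1 := Gsurv_le_one k Q
  have hadd : (1:ℝ≥0∞) = ENNReal.ofReal (Gsurv k Q) + ENNReal.ofReal (1 - Gsurv k Q) := by
    rw [← ENNReal.ofReal_add h01 (by linarith)]
    norm_num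
  exact ENNReal.sub_eq_of_eq_add ENNReal.ofReal_ne_top hadd

lemma compare_antitone (ν : Measure ℝ) [IsProbabilityMeasure ν]
    (hν : ∀ t : ℝ, ν (Set.Iic t) ≤ ENNReal.ofReal t)
    (g : ℝ → ℝ) (hg : Antitone g) (hg0 : ∀ x, 0 ≤ g x) :
    ∫⁻ x, ENNReal.ofReal (g x) ∂ν ≤ ∫⁻ x in Set.Icc (0:ℝ) 1, ENNReal.ofReal (g x) := by
  have hgm : Measurable g := hg.measurable
  rw [lintegral_eq_lintegral_meas_lt ν (ae_of_all _ hg0) hgm.aemeasurable,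
      lintegral_eq_lintegral_meas_lt _ (ae_of_all _ hg0) hgm.aemeasurable]
  apply lintegral_mono
  intro t
  simp only []
  set S := {a : ℝ | t < g a} with hSdef
  have hSmeas : MeasurableSet S := measurableSet_lt measurable_const hgm
  have hlower : ∀ {x y : ℝ}, x ≤ y → y ∈ S → x ∈ S := fun hxy hy => lt_of_lt_of_le hy (hg hxy)
  rw [Measure.restrict_apply hSmeas]
  by_cases hempty : S = ∅
  · simp [hempty]
  by_cases h1 : (1:ℝ) ∈ S
  · have hsub : Set.Icc (0:ℝ) 1 ⊆ S := fun x hx => hlower hx.2 h1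
    rw [Set.inter_eq_right.mpr hsub, Real.volume_Icc]
    calc ν S ≤ 1 := prob_le_one
      _ = ENNReal.ofReal (1 - 0) := by norm_num
  · have hne : S.Nonempty := Set.nonempty_iff_ne_empty.mpr hempty
    have hbdd : ∀ x ∈ S, x ≤ (1:ℝ) := by
      intro x hx
      by_contra h
      push_neg at h
      exact h1 (hlower h.le hx)
    have hbddA : BddAbove S := ⟨1, fun x hx => hbdd x hx⟩
    set c := sSup S with hc
    have hc1 : c ≤ 1 := csSup_le hne hbdd
    have hsubc : S ⊆ Set.Iic c := fun x hx => le_csSup hbddA hx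
    have hν' : ν S ≤ ENNReal.ofReal c := le_trans (measure_mono hsubc) (hν c)
    by_cases hc0 : c ≤ 0
    · calc ν S ≤ ENNReal.ofReal c := hν'
        _ = 0 := ENNReal.ofReal_eq_zero.mpr hc0
        _ ≤ _ := zero_le
    · push_neg at hc0
      have hico : Set.Ico (0:ℝ) c ⊆ S ∩ Set.Icc 0 1 := by
        intro x hx
        obtain ⟨y, hy, hxy⟩ := exists_lt_of_lt_csSup hne hx.2
        exact ⟨hlower hxy.le hy, hx.1, le_trans hx.2.le hc1⟩
      calc ν S ≤ ENNReal.ofReal c := hν'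
        _ = volume (Set.Ico (0:ℝ) c) := by rw [Real.volume_Ico]; norm_num
        _ ≤ volume (S ∩ Set.Icc 0 1) := measure_mono hico

lemma Gaux_continuous (k : ℕ) : Continuous (Gaux k) := by
  unfold Gaux
  apply Continuous.mul (by fun_prop)
  exact continuous_finset_sum _ (fun i _ => by fun_prop)

noncomputable def gtfun (k : ℕ) (Q : ℝ) (x : ℝ) : ℝ :=
  if x ≤ 0 then 1 else Gsurv k (Q + 2 * Real.log x)

lemma gtfun_antitone (k : ℕ) (Q : ℝ) : Antitone (gtfun k Q) := by
  intro x y hxy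
  unfold gtfun
  by_cases hy : y ≤ 0
  · have hx : x ≤ 0 := le_trans hxy hy
    simp [hx, hy]
  · rw [if_neg hy]
    by_cases hx : x ≤ 0
    · rw [if_pos hx]
      exact Gsurv_le_one _ _
    · rw [if_neg hx]
      apply Gsurv_antitone
      have := Real.log_le_log (not_le.mp hx) hxy
      linarith

lemma step_integral (k : ℕ) (Q : ℝ) :
    ∫⁻ x in Set.Icc (0:ℝ) 1, ENNReal.ofReal (gtfun k Q x)
      = ENNReal.ofReal (Gsurv (k+1) Q) := by
  have hgt0 : ∀ x, 0 ≤ gtfun k Q x := by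
    intro x; unfold gtfun; split
    · norm_num
    · exact Gsurv_nonneg _ _
  have hgt1 : ∀ x, gtfun k Q x ≤ 1 := by
    intro x; unfold gtfun; split
    · norm_num
    · exact Gsurv_le_one _ _
  by_cases hQ : Q ≤ 0
  · have hone : ∀ x ∈ Set.Icc (0:ℝ) 1, gtfun k Q x = 1 := by
      intro x hx
      unfold gtfun
      split
      · rfl
      · have hx0 : 0 < x := not_le.mp (by assumption)
        have hlog : Real.log x ≤ 0 := Real.log_nonpos hx0.le hx.2
        unfold Gsurv
        rw [if_pos (by linarith)]
    rw [setLIntegral_congr_fun measurableSet_Icc (fun x hx => by rw [hone x hx])]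
    unfold Gsurv
    rw [if_pos hQ]
    simp [Real.volume_Icc]
  · push_neg at hQ
    set c := Real.exp (-(Q/2)) with hc
    have hc0 : 0 < c := Real.exp_pos _
    have hc1 : c < 1 := Real.exp_lt_one_iff.mpr (by linarith)
    have hlogc : Real.log c = -(Q/2) := Real.log_exp _
    have hgm : Measurable (gtfun k Q) := (gtfun_antitone k Q).measurable
    have hint : IntegrableOn (gtfun k Q) (Set.Icc (0:ℝ) 1) volume := by
      apply (integrable_const (1:ℝ)).mono' hgm.aestronglyMeasurable
      filter_upwards with x
      rw [Real.norm_eq_abs, abs_of_nonneg (hgt0 x)]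
      exact hgt1 x
    rw [← ofReal_integral_eq_lintegral_ofReal hint (ae_of_all _ hgt0)]
    congr 1
    have hIoc : ∫ x in Set.Icc (0:ℝ) 1, gtfun k Q x = ∫ x in Set.Ioc (0:ℝ) 1, gtfun k Q x :=
      setIntegral_congr_set Ioc_ae_eq_Icc.symm
    have hsplit : Set.Ioc (0:ℝ) c ∪ Set.Ioc c 1 = Set.Ioc (0:ℝ) 1 :=
      Set.Ioc_union_Ioc_eq_Ioc hc0.le hc1.le
    have hdisj : Disjoint (Set.Ioc (0:ℝ) c) (Set.Ioc c 1) := Set.Ioc_disjoint_Ioc_of_le le_rfl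
    have hi1 : IntegrableOn (gtfun k Q) (Set.Ioc (0:ℝ) c) volume :=
      hint.mono_set (fun x hx => ⟨hx.1.le, le_trans hx.2 hc1.le⟩)
    have hi2 : IntegrableOn (gtfun k Q) (Set.Ioc c 1) volume :=
      hint.mono_set (fun x hx => ⟨le_trans hc0.le hx.1.le, hx.2⟩)
    rw [hIoc, ← hsplit, setIntegral_union hdisj measurableSet_Ioc hi1 hi2]
    have hfirst : ∫ x in Set.Ioc (0:ℝ) c, gtfun k Q x = c := by
      rw [setIntegral_congr_fun measurableSet_Ioc (g := fun _ => (1:ℝ)) (fun x hx => by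
        unfold gtfun
        rw [if_neg (not_le.mpr hx.1)]
        have : Real.log x ≤ -(Q/2) := by
          rw [← hlogc]
          exact Real.log_le_log hx.1 hx.2
        unfold Gsurv
        rw [if_pos (by linarith)])]
      simp [Real.volume_Ioc, hc0.le]
    rw [hfirst]
    -- second integral
    rcases Nat.eq_zero_or_pos k with hk0 | hkpos
    · subst hk0
      have hsecond : ∫ x in Set.Ioc c 1, gtfun 0 Q x = 0 := by
        rw [setIntegral_congr_fun measurableSet_Ioc (g := fun _ => (0:ℝ)) (fun x hx => by
          unfold gtfun
          rw [if_neg (not_le.mpr (lt_trans hc0 hx.1))]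
          have : -(Q/2) < Real.log x := by
            rw [← hlogc]
            exact Real.log_lt_log hc0 hx.1
          unfold Gsurv
          rw [if_neg (by push_neg; linarith)]
          unfold Gaux
          simp)]
        simp
      rw [hsecond]
      unfold Gsurv Gaux
      rw [if_neg (not_le.mpr hQ)]
      simp [hc]
    · have hsecond : ∫ x in Set.Ioc c 1, gtfun k Q x
          = ∫ x in c..1, Gaux k (Q + 2 * Real.log x) := by
        rw [intervalIntegral.integral_of_le hc1.le]
        apply setIntegral_congr_fun measurableSet_Ioc
        intro x hx
        unfold gtfun
        rw [if_neg (not_le.mpr (lt_trans hc0 hx.1))]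
        have hxlog : -(Q/2) ≤ Real.log x := by
          rw [← hlogc]
          exact (Real.log_le_log hc0 hx.1.le)
        unfold Gsurv
        split
        · have harg : Q + 2 * Real.log x = 0 := by linarith [‹Q + 2 * Real.log x ≤ 0›]
          beta_reduce
          rw [harg, Gaux_zero_arg k hkpos]
        · rfl
      rw [hsecond]
      set F := fun x : ℝ => Real.exp (-(Q/2))
        * ∑ i ∈ Finset.range k, (Q/2 + Real.log x)^(i+1) / ((i+1).factorial : ℝ) with hF
      have hderiv : ∀ x ∈ Set.uIcc c 1, HasDerivAt F (Gaux k (Q + 2 * Real.log x)) x := by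
        intro x hx
        rw [Set.uIcc_of_le hc1.le] at hx
        have hx0 : 0 < x := lt_of_lt_of_le hc0 hx.1
        have hlog : HasDerivAt Real.log x⁻¹ x := Real.hasDerivAt_log (ne_of_gt hx0)
        have hbase : HasDerivAt (fun y => Q/2 + Real.log y) x⁻¹ x := by
          simpa using (hlog.const_add (Q/2))
        have hterm : ∀ i : ℕ, HasDerivAt
            (fun y => (Q/2 + Real.log y)^(i+1) / ((i+1).factorial : ℝ))
            (((i+1:ℕ):ℝ) * (Q/2 + Real.log x)^i * x⁻¹ / ((i+1).factorial : ℝ)) x := by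
          intro i
          have := (hbase.pow (i+1)).div_const ((i+1).factorial : ℝ)
          simpa using this
        have hsum := HasDerivAt.fun_sum (u := Finset.range k) (fun i _ => hterm i)
        have := hsum.const_mul (Real.exp (-(Q/2)))
        apply this.congr_deriv
        unfold Gaux
        have hexp : Real.exp (-((Q + 2 * Real.log x)/2)) = Real.exp (-(Q/2)) * x⁻¹ := by
          rw [show -((Q + 2 * Real.log x)/2) = -(Q/2) + -(Real.log x) by ring,
            Real.exp_add, Real.exp_neg, Real.exp_neg, Real.exp_log hx0]
        rw [hexp]
        have harg : (Q + 2 * Real.log x)/2 = Q/2 + Real.log x := by ring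
        rw [harg, mul_assoc]
        congr 1
        rw [Finset.mul_sum]
        apply Finset.sum_congr rfl
        intro i _
        rw [Nat.factorial_succ]
        have h1 : (i.factorial : ℝ) ≠ 0 := by positivity
        have h2 : ((i:ℝ)+1) ≠ 0 := by positivity
        push_cast
        field_simp
      have hcont : IntervalIntegrable (fun x => Gaux k (Q + 2 * Real.log x)) volume c 1 := by
        apply ContinuousOn.intervalIntegrable
        apply (Gaux_continuous k).comp_continuousOn
        apply ContinuousOn.add continuousOn_const
        apply ContinuousOn.mul continuousOn_const
        apply Real.continuousOn_log.mono
        intro x hx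
        rw [Set.uIcc_of_le hc1.le] at hx
        exact ne_of_gt (lt_of_lt_of_le hc0 hx.1)
      rw [intervalIntegral.integral_eq_sub_of_hasDerivAt hderiv hcont]
      simp only [hF]; beta_reduce
      rw [Real.log_one, hlogc]
      have hzero : ∑ i ∈ Finset.range k, (Q/2 + -(Q/2))^(i+1) / ((i+1).factorial : ℝ) = 0 := by
        apply Finset.sum_eq_zero
        intro i _
        rw [show Q/2 + -(Q/2) = 0 by ring, zero_pow (Nat.succ_ne_zero i)]
        simp
      rw [hzero]
      unfold Gsurv Gaux
      rw [if_neg (not_le.mpr hQ), Finset.sum_range_succ']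
      simp only [add_zero]
      push_cast
      rw [hc]
      simp only [Nat.factorial_zero, Nat.cast_one]
      ring

lemma measurable_sumlog (m : ℕ) : Measurable (fun y : Fin m → ℝ => ∑ j, Real.log (y j)) :=
  Finset.measurable_sum _ (fun j _ => Real.measurable_log.comp (measurable_pi_apply j))

lemma pi_fisher_bound : ∀ (n : ℕ) (ρ : Fin n → Measure ℝ),
    (∀ j, IsProbabilityMeasure (ρ j)) →
    (∀ j t, ρ j (Set.Iic t) ≤ ENNReal.ofReal t) →
    ∀ Q : ℝ, Measure.pi ρ {y | Q ≤ -2 * ∑ j, Real.log (y j)}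
      ≤ ENNReal.ofReal (Gsurv n Q) := by
  intro n
  induction n with
  | zero =>
      intro ρ hprob Q
      intro Q
      haveI : ∀ j, IsProbabilityMeasure (ρ j) := hprob
      by_cases hQ : Q ≤ 0
      · calc Measure.pi ρ _ ≤ 1 := prob_le_one
          _ = ENNReal.ofReal (Gsurv 0 Q) := by
            unfold Gsurv; rw [if_pos hQ]; simp
      · have hempty : {y : Fin 0 → ℝ | Q ≤ -2 * ∑ j, Real.log (y j)} = ∅ := by
          ext y
          simp only [Set.mem_setOf_eq, Set.mem_empty_iff_false, iff_false, not_le]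
          have : ∑ j : Fin 0, Real.log (y j) = 0 := Finset.sum_empty
          rw [this]
          push_neg at hQ
          linarith
        rw [hempty]
        simp
  | succ n ih =>
      intro ρ hprob H Q
      haveI : ∀ j, IsProbabilityMeasure (ρ j) := hprob
      set e := MeasurableEquiv.piFinSuccAbove (fun _ : Fin (n+1) => ℝ) 0 with he
      have hmp := measurePreserving_piFinSuccAbove ρ 0
      set ρ' := fun j : Fin n => ρ ((0 : Fin (n+1)).succAbove j) with hρ'
      haveI : ∀ j, IsProbabilityMeasure (ρ' j) := fun j => hprob _
      set E' := {q : ℝ × (Fin n → ℝ) | Q ≤ -2 * (Real.log q.1 + ∑ j, Real.log (q.2 j))}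
        with hE'
      have hE'meas : MeasurableSet E' := by
        apply measurableSet_le measurable_const
        apply Measurable.const_mul
        exact (Real.measurable_log.comp measurable_fst).add
          ((measurable_sumlog n).comp measurable_snd)
      have hpre : {y : Fin (n+1) → ℝ | Q ≤ -2 * ∑ j, Real.log (y j)} = e ⁻¹' E' := by
        ext y
        simp only [Set.mem_setOf_eq, Set.mem_preimage, hE', he,
          MeasurableEquiv.piFinSuccAbove_apply]
        rw [Fin.sum_univ_succAbove (fun j => Real.log (y j)) 0]
        rfl
      rw [hpre, hmp.measure_preimage hE'meas.nullMeasurableSet,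
        Measure.prod_apply hE'meas]
      have hsection : ∀ x : ℝ, (Prod.mk x ⁻¹' E')
          = {z : Fin n → ℝ | Q + 2 * Real.log x ≤ -2 * ∑ j, Real.log (z j)} := by
        intro x
        ext z
        simp only [Set.mem_preimage, Set.mem_setOf_eq, hE']
        constructor <;> intro h <;> linarith
      calc ∫⁻ x, Measure.pi ρ' (Prod.mk x ⁻¹' E') ∂(ρ 0)
          ≤ ∫⁻ x, ENNReal.ofReal (gtfun n Q x) ∂(ρ 0) := by
            apply lintegral_mono
            intro x
            show Measure.pi ρ' (Prod.mk x ⁻¹' E') ≤ ENNReal.ofReal (gtfun n Q x)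
            rw [hsection x]
            refine le_trans (ih ρ' (fun j => hprob _) (fun j t => H _ t) _) ?_
            unfold gtfun
            split
            · exact ENNReal.ofReal_le_ofReal (Gsurv_le_one _ _)
            · exact le_refl _
        _ ≤ ∫⁻ x in Set.Icc (0:ℝ) 1, ENNReal.ofReal (gtfun n Q x) :=
            compare_antitone (ρ 0) (H 0) _ (gtfun_antitone n Q) (fun x => by
              unfold gtfun; split
              · norm_num
              · exact Gsurv_nonneg _ _)
        _ = ENNReal.ofReal (Gsurv (n+1) Q) := step_integral n Q

lemma density_bound (f : ℝ → ℝ) (hmono : MonotoneOn f (Set.Icc (0:ℝ) 1))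
    (hf : ∀ x ∈ Set.Icc (0:ℝ) 1, 0 ≤ f x)
    (m : Measure ℝ)
    (hm : m = (volume.restrict (Set.Icc (0:ℝ) 1)).withDensity (fun x => ENNReal.ofReal (f x)))
    (τ : ℝ) (hτ : τ ∈ Set.Ioc (0:ℝ) 1) {t : ℝ} (ht : t ∈ Set.Icc (0:ℝ) 1) :
    m (Set.Iic (t * τ)) ≤ ENNReal.ofReal t * m (Set.Iic τ) := by
  obtain ⟨hτ0, hτ1⟩ := hτ
  obtain ⟨ht0, ht1⟩ := ht
  set a := t * τ with ha
  have ha0 : 0 ≤ a := mul_nonneg ht0 hτ0.le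
  have haτ : a ≤ τ := by
    calc a = t * τ := rfl
      _ ≤ 1 * τ := mul_le_mul_of_nonneg_right ht1 hτ0.le
      _ = τ := one_mul _
  have ha1 : a ≤ 1 := le_trans haτ hτ1
  have haIcc : a ∈ Set.Icc (0:ℝ) 1 := ⟨ha0, ha1⟩
  have happ : ∀ s : ℝ, m (Set.Iic s)
      = ∫⁻ x in Set.Iic s ∩ Set.Icc 0 1, ENNReal.ofReal (f x) := by
    intro s
    rw [hm, withDensity_apply _ measurableSet_Iic, Measure.restrict_restrict measurableSet_Iic]
  have hIica : Set.Iic a ∩ Set.Icc 0 1 = Set.Icc 0 a := by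
    ext x
    simp only [Set.mem_inter_iff, Set.mem_Iic, Set.mem_Icc]
    constructor
    · rintro ⟨h1, h2, h3⟩; exact ⟨h2, h1⟩
    · rintro ⟨h1, h2⟩; exact ⟨h2, h1, le_trans h2 ha1⟩
  have hIicτ : Set.Iic τ ∩ Set.Icc 0 1 = Set.Icc 0 τ := by
    ext x
    simp only [Set.mem_inter_iff, Set.mem_Iic, Set.mem_Icc]
    constructor
    · rintro ⟨h1, h2, h3⟩; exact ⟨h2, h1⟩
    · rintro ⟨h1, h2⟩; exact ⟨h2, h1, le_trans h2 hτ1⟩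
  set I₁ := ∫⁻ x in Set.Icc (0:ℝ) a, ENNReal.ofReal (f x) with hI₁
  set I₂ := ∫⁻ x in Set.Ioc a τ, ENNReal.ofReal (f x) with hI₂
  have hma : m (Set.Iic a) = I₁ := by rw [happ, hIica]
  have hmτ : m (Set.Iic τ) = I₁ + I₂ := by
    rw [happ, hIicτ, ← Set.Icc_union_Ioc_eq_Icc ha0 haτ,
      lintegral_union measurableSet_Ioc (by
        apply Set.disjoint_left.mpr
        intro x hx hx'
        exact absurd hx'.1 (not_lt.mpr hx.2))]
  have ub1 : I₁ ≤ ENNReal.ofReal (f a) * ENNReal.ofReal a := by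
    calc I₁ ≤ ∫⁻ _x in Set.Icc (0:ℝ) a, ENNReal.ofReal (f a) := by
          apply setLIntegral_mono' measurableSet_Icc
          intro x hx
          exact ENNReal.ofReal_le_ofReal
            (hmono ⟨hx.1, le_trans hx.2 ha1⟩ haIcc hx.2)
      _ = ENNReal.ofReal (f a) * ENNReal.ofReal a := by
          rw [setLIntegral_const, Real.volume_Icc, sub_zero]
  have lb2 : ENNReal.ofReal (f a) * ENNReal.ofReal (τ - a) ≤ I₂ := by
    calc ENNReal.ofReal (f a) * ENNReal.ofReal (τ - a)
        = ∫⁻ _x in Set.Ioc a τ, ENNReal.ofReal (f a) := by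
          rw [setLIntegral_const, Real.volume_Ioc]
      _ ≤ I₂ := by
          apply setLIntegral_mono' measurableSet_Ioc
          intro x hx
          exact ENNReal.ofReal_le_ofReal
            (hmono haIcc ⟨le_trans ha0 hx.1.le, le_trans hx.2 hτ1⟩ hx.1.le)
  have hI₁top : I₁ ≠ ⊤ :=
    ne_top_of_le_ne_top (by finiteness) ub1
  have hτI : ENNReal.ofReal τ * I₁ ≤ ENNReal.ofReal a * (I₁ + I₂) := by
    have hsplitτ : ENNReal.ofReal τ = ENNReal.ofReal a + ENNReal.ofReal (τ - a) := by
      rw [← ENNReal.ofReal_add ha0 (by linarith)]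
      congr 1
      ring
    rw [hsplitτ, add_mul, mul_add]
    apply add_le_add_right
    calc ENNReal.ofReal (τ - a) * I₁
        ≤ ENNReal.ofReal (τ - a) * (ENNReal.ofReal (f a) * ENNReal.ofReal a) :=
          mul_le_mul_right ub1 _
      _ = ENNReal.ofReal a * (ENNReal.ofReal (f a) * ENNReal.ofReal (τ - a)) := by ring
      _ ≤ ENNReal.ofReal a * I₂ := mul_le_mul_right lb2 _
  have hne : ENNReal.ofReal τ ≠ 0 := by
    simp only [ne_eq, ENNReal.ofReal_eq_zero, not_le]
    exact hτ0
  rw [hma, hmτ]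
  calc I₁ = (ENNReal.ofReal τ)⁻¹ * (ENNReal.ofReal τ * I₁) := by
        rw [← mul_assoc, ENNReal.inv_mul_cancel hne ENNReal.ofReal_ne_top, one_mul]
    _ ≤ (ENNReal.ofReal τ)⁻¹ * (ENNReal.ofReal a * (I₁ + I₂)) := mul_le_mul_right hτI _
    _ = ((ENNReal.ofReal τ)⁻¹ * ENNReal.ofReal a) * (I₁ + I₂) := by rw [mul_assoc]
    _ = ENNReal.ofReal t * (I₁ + I₂) := by
        congr 1
        rw [mul_comm, ← div_eq_mul_inv, ← ENNReal.ofReal_div_of_pos hτ0]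
        congr 1
        rw [ha, mul_div_assoc, div_self (ne_of_gt hτ0), mul_one]

/-- Truncated Fisher combination: conditional on all `p_j ≤ τ_j`, the
rescaled p-values `p_j/τ_j` are jointly super-uniform, and Fisher's statistic
`−2∑log(p_j/τ_j)` is stochastically dominated by a `χ²_{2k}` distribution
(the Gamma distribution with shape `k` and rate `1/2`). -/
theorem truncated_fisher_validity
    {Ω : Type*} [MeasurableSpace Ω] (μpr : Measure Ω) [IsProbabilityMeasure μpr]
    (k : ℕ) (hk : 1 ≤ k)
    (p : Fin k → Ω → ℝ) (hmeas : ∀ j, Measurable (p j))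
    (hindep : iIndepFun p μpr)
    (f : Fin k → ℝ → ℝ)
    (hmono : ∀ j, MonotoneOn (f j) (Set.Icc (0:ℝ) 1))
    (hf_nonneg : ∀ j, ∀ x ∈ Set.Icc (0:ℝ) 1, 0 ≤ f j x)
    (hdens : ∀ j, μpr.map (p j)
      = (volume.restrict (Set.Icc (0:ℝ) 1)).withDensity (fun x => ENNReal.ofReal (f j x)))
    (τ : Fin k → ℝ) (hτ : ∀ j, τ j ∈ Set.Ioc (0:ℝ) 1)
    (Sel : Set Ω) (hSel : Sel = {ω | ∀ j, p j ω ≤ τ j})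
    (hpos : 0 < μpr Sel) :
    (∀ t : Fin k → ℝ, (∀ j, t j ∈ Set.Icc (0:ℝ) 1) →
      μpr[|Sel] {ω | ∀ j, p j ω / τ j ≤ t j} ≤ ENNReal.ofReal (∏ j, t j)) ∧
    (∀ Q : ℝ,
      μpr[|Sel] {ω | Q ≤ -2 * ∑ j, Real.log (p j ω / τ j)}
        ≤ gammaMeasure k (1/2) (Set.Ici Q)) := by

  set m := fun j => μpr.map (p j) with hm
  haveI : ∀ j, IsProbabilityMeasure (m j) :=
    fun j => Measure.isProbabilityMeasure_map (hmeas j).aemeasurable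
  set P : Ω → (Fin k → ℝ) := fun ω j => p j ω with hP
  have hPmeas : Measurable P := measurable_pi_iff.mpr hmeas
  have hmapP : μpr.map P = Measure.pi m := by
    refine (Measure.pi_eq fun s hs => ?_).symm
    rw [Measure.map_apply hPmeas (MeasurableSet.univ_pi hs)]
    have hpre : P ⁻¹' (Set.pi Set.univ s) = ⋂ j, p j ⁻¹' s j := by
      ext ω
      simp [hP, Set.mem_univ_pi]
    rw [hpre, hindep.meas_iInter (fun j => ⟨s j, hs j, rfl⟩)]
    exact Finset.prod_congr rfl fun j _ => (Measure.map_apply (hmeas j) (hs j)).symm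
  have hSelom : Sel = P ⁻¹' (Set.pi Set.univ fun j => Set.Iic (τ j)) := by
    rw [hSel]; ext ω
    simp only [Set.mem_setOf_eq, Set.mem_preimage, Set.mem_univ_pi, hP, Set.mem_Iic]
  have hSelMeas : MeasurableSet Sel := by
    rw [hSelom]
    exact hPmeas (MeasurableSet.univ_pi fun j => measurableSet_Iic)
  have hμSel : μpr Sel = ∏ j, m j (Set.Iic (τ j)) := by
    rw [hSelom, ← Measure.map_apply hPmeas (MeasurableSet.univ_pi fun j => measurableSet_Iic),
      hmapP, Measure.pi_pi]
  set c := fun j => m j (Set.Iic (τ j)) with hc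
  have hc0 : ∀ j, c j ≠ 0 := by
    intro j h0
    rw [hμSel, Finset.prod_eq_zero (Finset.mem_univ j) h0] at hpos
    exact lt_irrefl _ hpos
  have hkey : ∀ j, ∀ t ∈ Set.Icc (0:ℝ) 1,
      m j (Set.Iic (t * τ j)) ≤ ENNReal.ofReal t * c j :=
    fun j t ht => density_bound (f j) (hmono j) (hf_nonneg j) (m j) (hdens j) (τ j) (hτ j) ht
  constructor
  · -- Part 1
    intro t ht
    have hinter : Sel ∩ {ω | ∀ j, p j ω / τ j ≤ t j} = ⋂ j, p j ⁻¹' Set.Iic (t j * τ j) := by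
      ext ω
      simp only [Set.mem_inter_iff, Set.mem_setOf_eq, Set.mem_iInter, Set.mem_preimage,
        Set.mem_Iic, hSel]
      constructor
      · rintro ⟨h1, h2⟩ j
        have := (div_le_iff₀ (hτ j).1).mp (h2 j)
        linarith [this]
      · intro h
        refine ⟨fun j => ?_, fun j => ?_⟩
        · calc p j ω ≤ t j * τ j := h j
            _ ≤ 1 * τ j := mul_le_mul_of_nonneg_right (ht j).2 (hτ j).1.le
            _ = τ j := one_mul _
        · rw [div_le_iff₀ (hτ j).1]
          exact h j
    rw [cond_apply hSelMeas, hinter,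
      hindep.meas_iInter (fun j => ⟨Set.Iic (t j * τ j), measurableSet_Iic, rfl⟩)]
    have hbound : ∏ j, μpr (p j ⁻¹' Set.Iic (t j * τ j))
        ≤ ENNReal.ofReal (∏ j, t j) * μpr Sel := by
      rw [ENNReal.ofReal_prod_of_nonneg (fun j _ => (ht j).1), hμSel,
        ← Finset.prod_mul_distrib]
      apply Finset.prod_le_prod'
      intro j _
      have heq : μpr (p j ⁻¹' Set.Iic (t j * τ j)) = m j (Set.Iic (t j * τ j)) :=
        (Measure.map_apply (hmeas j) measurableSet_Iic).symm
      rw [heq]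
      exact hkey j (t j) (ht j)
    calc (μpr Sel)⁻¹ * ∏ j, μpr (p j ⁻¹' Set.Iic (t j * τ j))
        ≤ (μpr Sel)⁻¹ * (ENNReal.ofReal (∏ j, t j) * μpr Sel) :=
          mul_le_mul_right hbound _
      _ = ENNReal.ofReal (∏ j, t j) * ((μpr Sel)⁻¹ * μpr Sel) := by ring
      _ = ENNReal.ofReal (∏ j, t j) := by
          rw [ENNReal.inv_mul_cancel (ne_of_gt hpos) (measure_ne_top _ _), mul_one]
  · -- Part 2
    intro Q
    set ν := fun j => (c j)⁻¹ • ((m j).restrict (Set.Iic (τ j))) with hν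
    haveI hνprob : ∀ j, IsProbabilityMeasure (ν j) := by
      intro j
      constructor
      rw [hν]
      simp only [Measure.smul_apply, smul_eq_mul,
        Measure.restrict_apply MeasurableSet.univ, Set.univ_inter]
      exact ENNReal.inv_mul_cancel (hc0 j) (measure_ne_top _ _)
    have hcondmap : (μpr[|Sel]).map P = Measure.pi ν := by
      refine (Measure.pi_eq fun s hs => ?_).symm
      rw [Measure.map_apply hPmeas (MeasurableSet.univ_pi hs), cond_apply hSelMeas]
      have hint : Sel ∩ P ⁻¹' (Set.pi Set.univ s) = ⋂ j, p j ⁻¹' (s j ∩ Set.Iic (τ j)) := by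
        ext ω
        rw [hSel]
        simp only [Set.mem_inter_iff, Set.mem_setOf_eq, Set.mem_preimage, Set.mem_univ_pi,
          Set.mem_iInter, Set.mem_Iic, hP]
        constructor
        · rintro ⟨h1, h2⟩ j; exact ⟨h2 j, h1 j⟩
        · intro h; exact ⟨fun j => (h j).2, fun j => (h j).1⟩
      rw [hint, hindep.meas_iInter
        (fun j => ⟨s j ∩ Set.Iic (τ j), (hs j).inter measurableSet_Iic, rfl⟩), hμSel]
      have hprodinv : (∏ j, c j)⁻¹ = ∏ j, (c j)⁻¹ :=
        ENNReal.prod_inv_distrib (fun i _ j _ _ => Or.inl (hc0 i))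
      rw [hprodinv, ← Finset.prod_mul_distrib]
      apply Finset.prod_congr rfl
      intro j _
      rw [hν]
      simp only [Measure.smul_apply, smul_eq_mul, Measure.restrict_apply (hs j), hm]
      rw [Measure.map_apply (hmeas j) ((hs j).inter measurableSet_Iic)]
    set ρ := fun j => (ν j).map (fun y : ℝ => y / τ j) with hρ
    have hdivmeas : ∀ j, Measurable (fun y : ℝ => y / τ j) :=
      fun j => measurable_id.div_const _
    haveI : ∀ j, IsProbabilityMeasure (ρ j) :=
      fun j => Measure.isProbabilityMeasure_map (hdivmeas j).aemeasurable
    have hDmp : MeasurePreserving (fun (y : Fin k → ℝ) j => y j / τ j)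
        (Measure.pi ν) (Measure.pi ρ) :=
      measurePreserving_pi ν ρ (fun j => ⟨hdivmeas j, rfl⟩)
    have hρH : ∀ j t, ρ j (Set.Iic t) ≤ ENNReal.ofReal t := by
      intro j t
      rw [hρ, Measure.map_apply (hdivmeas j) measurableSet_Iic]
      have hpre2 : (fun y : ℝ => y / τ j) ⁻¹' Set.Iic t = Set.Iic (t * τ j) := by
        ext y
        simp [Set.mem_Iic, div_le_iff₀ (hτ j).1]
      rw [hpre2, hν]
      simp only [Measure.smul_apply, smul_eq_mul, Measure.restrict_apply measurableSet_Iic]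
      rcases le_or_gt t 0 with ht0 | ht0
      · have hnull : m j (Set.Iic (t * τ j) ∩ Set.Iic (τ j)) = 0 := by
          have hsub : Set.Iic (t * τ j) ∩ Set.Iic (τ j) ⊆ Set.Iic 0 := by
            intro x hx
            exact le_trans hx.1 (mul_nonpos_of_nonpos_of_nonneg ht0 (hτ j).1.le)
          apply measure_mono_null hsub
          simp only [hm]
          rw [hdens j, withDensity_apply _ measurableSet_Iic,
            Measure.restrict_restrict measurableSet_Iic]
          apply setLIntegral_measure_zero
          have hsing : Set.Iic (0:ℝ) ∩ Set.Icc 0 1 = {0} := by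
            ext x
            simp only [Set.mem_inter_iff, Set.mem_Iic, Set.mem_Icc, Set.mem_singleton_iff]
            constructor
            · rintro ⟨h1, h2, _⟩; linarith
            · rintro rfl; norm_num
          rw [hsing]
          exact Real.volume_singleton
        rw [hnull, mul_zero]
        exact zero_le
      rcases le_or_gt t 1 with ht1 | ht1
      · have hinter2 : Set.Iic (t * τ j) ∩ Set.Iic (τ j) = Set.Iic (t * τ j) := by
          apply Set.inter_eq_left.mpr
          apply Set.Iic_subset_Iic.mpr
          calc t * τ j ≤ 1 * τ j := mul_le_mul_of_nonneg_right ht1 (hτ j).1.le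
            _ = τ j := one_mul _
        rw [hinter2]
        calc (c j)⁻¹ * m j (Set.Iic (t * τ j))
            ≤ (c j)⁻¹ * (ENNReal.ofReal t * c j) :=
              mul_le_mul_right (hkey j t ⟨ht0.le, ht1⟩) _
          _ = ENNReal.ofReal t * ((c j)⁻¹ * c j) := by ring
          _ = ENNReal.ofReal t := by
              rw [ENNReal.inv_mul_cancel (hc0 j) (measure_ne_top _ _), mul_one]
      · calc (c j)⁻¹ * m j (Set.Iic (t * τ j) ∩ Set.Iic (τ j))
            ≤ (c j)⁻¹ * c j :=
              mul_le_mul_right (measure_mono Set.inter_subset_right) _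
          _ = 1 := ENNReal.inv_mul_cancel (hc0 j) (measure_ne_top _ _)
          _ ≤ ENNReal.ofReal t := ENNReal.one_le_ofReal.mpr ht1.le
    have hBmeas : MeasurableSet {z : Fin k → ℝ | Q ≤ -2 * ∑ j, Real.log (z j)} :=
      measurableSet_le measurable_const ((measurable_sumlog k).const_mul (-2))
    have hDmeas : Measurable (fun (y : Fin k → ℝ) j => y j / τ j) := hDmp.measurable
    have hevent : {ω | Q ≤ -2 * ∑ j, Real.log (p j ω / τ j)}
        = P ⁻¹' ((fun (y : Fin k → ℝ) j => y j / τ j) ⁻¹'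
            {z : Fin k → ℝ | Q ≤ -2 * ∑ j, Real.log (z j)}) := by
      ext ω
      simp [hP]
    rw [hevent, ← Measure.map_apply hPmeas (hDmeas hBmeas), hcondmap,
      ← Measure.map_apply hDmeas hBmeas, hDmp.map_eq, gamma_Ici k hk Q]
    exact pi_fisher_bound k ρ (fun j => inferInstance) hρH Q
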